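/- Let δ be a metric on a finite set X and let S, O ⊆ X be center sets of size k with unique nearest assignments, where O minimizes the k-median cost. Then there exists a set 𝒮 ⊆ S × O of k candidate swaps such that every center of O occurs as the second coordinate of exactly one pair of 𝒮 and every center of S occurs as the first coordinate of at most two pairs, and, writing δ′_{(i,j)}(p) = min_{c ∈ (S∖{i})∪{j}} δ(p, c): (a) for every p ∈ X10 ∪ X11, Σ_{(i,j)∈𝒮} (δ(p) − δ′_{(i,j)}(p)) ≥ δ(p) − δ*(p); (b) for every p ∈ X01 and every (i,j) ∈ 𝒮, δ′_{(i,j)}(p) ≤ δ*(p); and (c) for every p ∈ X00, Σ_{(i,j)∈𝒮} (δ(p) − δ′_{(i,j)}(p)) ≥ δ(p) − 5·δ*(p). -/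

import Mathlib

/-- `δ` is a metric on `X`. -/
def IsMetric {X : Type*} (δ : X → X → ℝ) : Prop :=
  (∀ p q, 0 ≤ δ p q) ∧ (∀ p, δ p p = 0) ∧ (∀ p q, δ p q = 0 → p = q) ∧
    (∀ p q, δ p q = δ q p) ∧ (∀ p q r, δ p r ≤ δ p q + δ q r)

/-- The `k`-median cost of a center set `S`: each point contributes its distance
to the nearest center. -/
noncomputable def kmedCost {X : Type*} [Fintype X] (δ : X → X → ℝ) (S : Finset X) : ℝ :=
  ∑ p : X, sInf (δ p '' (S : Set X))

/-- Every point of `X` has a unique nearest center in `S`. -/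
def UniqueNearest {X : Type*} (δ : X → X → ℝ) (S : Finset X) : Prop :=
  ∀ p : X, ∃! c, c ∈ S ∧ ∀ c' ∈ S, δ p c ≤ δ p c'

/-- The clustering (partition of `X`) induced by a center set `S`: points are grouped
according to their nearest center in `S`. -/
def clustering {X : Type*} (δ : X → X → ℝ) (S : Finset X) : Set (Set X) :=
  {Y | ∃ c ∈ S, Y = {p : X | ∀ c' ∈ S, δ p c ≤ δ p c'}}

/-- `P` is an optimal clustering of `(X, δ)`: it is induced by some center set of size `k`
(with unique nearest assignments) minimizing the `k`-median cost. -/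
def IsOptimalClustering {X : Type*} [Fintype X] (δ : X → X → ℝ) (k : ℕ)
    (P : Set (Set X)) : Prop :=
  ∃ S : Finset X, S.card = k ∧ UniqueNearest δ S ∧
    (∀ T : Finset X, T.card = k → kmedCost δ S ≤ kmedCost δ T) ∧
    P = clustering δ S

/-- The instance `(X, δ)` is `α`-stable: for every perturbation `δ'` with
`δ ≤ δ' ≤ α·δ` pointwise, every optimal clustering of `(X, δ)` is also an
optimal clustering of `(X, δ')`. -/
def IsStable {X : Type*} [Fintype X] (δ : X → X → ℝ) (k : ℕ) (α : ℝ) : Prop :=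
  ∀ δ' : X → X → ℝ, (∀ p q, δ p q ≤ δ' p q ∧ δ' p q ≤ α * δ p q) →
    ∀ P : Set (Set X), IsOptimalClustering δ k P → IsOptimalClustering δ' k P

/-- The distance from `p` to its nearest center after the 1-swap replacing `i ∈ S`
by `j`: `δ′_{(i,j)}(p) = min_{c ∈ (S∖{i})∪{j}} δ(p, c)`. -/
noncomputable def swapDist {X : Type*} [DecidableEq X] (δ : X → X → ℝ)
    (S : Finset X) (i j p : X) : ℝ :=
  sInf (δ p '' ((insert j (S.erase i) : Finset X) : Set X))



section Helpers
variable {X : Type*} [DecidableEq X]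

lemma sInf_image_le' (δ : X → X → ℝ) (p : X) {T : Finset X} {c : X} (hc : c ∈ T) :
    sInf (δ p '' (T : Set X)) ≤ δ p c :=
  csInf_le (Set.Finite.bddBelow ((T.finite_toSet).image _)) ⟨c, hc, rfl⟩

lemma exists_map_card_le' (P Q : Finset X) (hle : P.card ≤ 2 * Q.card) :
    ∃ h : X → X, (∀ p ∈ P, h p ∈ Q) ∧ ∀ q, (P.filter (fun p => h p = q)).card ≤ 2 := by
  classical
  set idx : X → ℕ := fun p => if hp : p ∈ P then (P.equivFin ⟨p, hp⟩ : ℕ) else 0 with hidx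
  have hidxlt : ∀ p ∈ P, idx p < P.card := by
    intro p hp
    simp only [hidx, dif_pos hp]
    exact (P.equivFin ⟨p, hp⟩).2
  have hidxinj : ∀ p ∈ P, ∀ p' ∈ P, idx p = idx p' → p = p' := by
    intro p hp p' hp' h
    simp only [hidx, dif_pos hp, dif_pos hp'] at h
    have := P.equivFin.injective (Fin.val_injective h)
    exact congrArg Subtype.val this
  refine ⟨fun p => if hp : p ∈ P then
      (Q.equivFin.symm ⟨idx p / 2, by have := hidxlt p hp; omega⟩ : X) else p, ?_, ?_⟩
  · intro p hp; simp only [dif_pos hp]; exact Subtype.mem _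
  · intro q
    have : (P.filter (fun p => (if hp : p ∈ P then
        (Q.equivFin.symm ⟨idx p / 2, by have := hidxlt p hp; omega⟩ : X) else p) = q)).card ≤
        (Finset.range 2).card := by
      apply Finset.card_le_card_of_injOn (fun p => idx p % 2)
      · intro p hp
        simp only [Finset.mem_coe, Finset.mem_range]
        omega
      · intro p hp p' hp' hmod
        simp only [Finset.mem_coe, Finset.mem_filter] at hp hp'
        obtain ⟨hpP, hpq⟩ := hp
        obtain ⟨hp'P, hp'q⟩ := hp'
        rw [dif_pos hpP] at hpq
        rw [dif_pos hp'P] at hp'q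
        have h2 := Subtype.coe_injective (hpq.trans hp'q.symm)
        have h3 := Q.equivFin.symm.injective h2
        have hdiv : idx p / 2 = idx p' / 2 := by simpa using congrArg Fin.val h3
        have hmod' : idx p % 2 = idx p' % 2 := hmod
        exact hidxinj p hpP p' hp'P (by omega)
    simpa using this
end Helpers

lemma exists_assignment' {X : Type*} [DecidableEq X] (I J : Finset X) (hIJ : J.card ≤ I.card)
    (g : X → X) :
    ∃ f : X → X, (∀ j ∈ J, f j ∈ I) ∧
      (∀ j ∈ J, ∀ o ∈ J, o ≠ j → g o ≠ f j) ∧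
      (∀ i : X, (J.filter (fun j => f j = i)).card ≤ 2) := by
  classical
  set B := J.filter (fun j => g j ∈ I ∧ J.filter (fun o => g o = g j) = {j}) with hBdef
  set A := I \ J.image g with hAdef
  have hBJ : B ⊆ J := Finset.filter_subset _ _
  have hginj : ∀ j ∈ B, ∀ j' ∈ B, g j = g j' → j = j' := by
    intro j hj j' hj' hgg
    have hj2 := (Finset.mem_filter.1 hj).2.2
    have : j' ∈ J.filter (fun o => g o = g j) :=
      Finset.mem_filter.2 ⟨hBJ hj', hgg.symm⟩
    rw [hj2] at this; exact (Finset.mem_singleton.1 this).symm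
  have hBI : B.image g ⊆ I ∩ J.image g := by
    intro i hi
    obtain ⟨j, hj, rfl⟩ := Finset.mem_image.1 hi
    exact Finset.mem_inter.2 ⟨(Finset.mem_filter.1 hj).2.1, Finset.mem_image_of_mem g (hBJ hj)⟩
  set I₂ := (I ∩ J.image g) \ B.image g with hI2def
  -- cardinality decomposition of I
  have hBcard : (B.image g).card = B.card :=
    Finset.card_image_of_injOn (fun a ha b hb h => hginj a ha b hb h)
  have hIsplit : I.card = A.card + (B.image g).card + I₂.card := by
    have h1 : A.card + (I ∩ J.image g).card = I.card := by
      rw [hAdef]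
      exact Finset.card_sdiff_add_card_inter I (J.image g)
    have h2 : (I ∩ J.image g).card = (B.image g).card + I₂.card := by
      rw [hI2def]
      have := Finset.card_sdiff_add_card_eq_card hBI
      omega
    omega
  -- each i in I₂ has at least two preimages in J \ B
  have hfib : ∀ i ∈ I₂, 2 ≤ ((J \ B).filter (fun j => g j = i)).card := by
    intro i hi
    obtain ⟨hiI, hiB⟩ := Finset.mem_sdiff.1 hi
    obtain ⟨hiI', hiJ⟩ := Finset.mem_inter.1 hiI
    obtain ⟨j, hj, hgj⟩ := Finset.mem_image.1 hiJ
    have hjB : j ∉ B := fun hjB => hiB (hgj ▸ Finset.mem_image_of_mem g hjB)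
    -- j ∈ J, g j = i, j ∉ B : so the fiber of g j in J is not {j}
    have hfilter_ne : J.filter (fun o => g o = g j) ≠ {j} := by
      intro heq
      exact hjB (Finset.mem_filter.2 ⟨hj, ⟨hgj ▸ hiI', heq⟩⟩)
    have hjmem : j ∈ J.filter (fun o => g o = g j) := Finset.mem_filter.2 ⟨hj, rfl⟩
    obtain ⟨j', hj', hne⟩ : ∃ j' ∈ J.filter (fun o => g o = g j), j' ≠ j := by
      by_contra hcon
      push_neg at hcon
      exact hfilter_ne (Finset.eq_singleton_iff_unique_mem.2 ⟨hjmem, fun x hx => hcon x hx⟩)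
    have hj'J : j' ∈ J := (Finset.mem_filter.1 hj').1
    have hgj' : g j' = i := hgj ▸ (Finset.mem_filter.1 hj').2
    have hj'B : j' ∉ B := by
      intro hj'B
      exact hiB (hgj' ▸ Finset.mem_image_of_mem g hj'B)
    have hjB' : j ∉ B := hjB
    apply Finset.one_lt_card.2
    exact ⟨j, Finset.mem_filter.2 ⟨Finset.mem_sdiff.2 ⟨hj, hjB⟩, hgj⟩,
      j', Finset.mem_filter.2 ⟨Finset.mem_sdiff.2 ⟨hj'J, hj'B⟩, hgj'⟩, Ne.symm hne⟩
  have hsum : 2 * I₂.card ≤ (J \ B).card := by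
    calc 2 * I₂.card = ∑ _i ∈ I₂, 2 := by rw [Finset.sum_const, smul_eq_mul, mul_comm]
    _ ≤ ∑ i ∈ I₂, ((J \ B).filter (fun j => g j = i)).card := Finset.sum_le_sum hfib
    _ = (I₂.biUnion (fun i => (J \ B).filter (fun j => g j = i))).card := by
        rw [Finset.card_biUnion]
        intro a ha b hb hab
        exact Finset.disjoint_filter.2 (fun x _ h1 h2 => hab (h1.symm.trans h2))
    _ ≤ (J \ B).card := Finset.card_le_card (by
        intro x hx
        obtain ⟨i, _, hxi⟩ := Finset.mem_biUnion.1 hx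
        exact (Finset.mem_filter.1 hxi).1)
  have hJB : (J \ B).card = J.card - B.card := Finset.card_sdiff_of_subset hBJ
  have hBleJ : B.card ≤ J.card := Finset.card_le_card hBJ
  have hcap : (J \ B).card ≤ 2 * A.card := by omega
  obtain ⟨h, hhmem, hhfib⟩ := exists_map_card_le' (J \ B) A hcap
  refine ⟨fun j => if j ∈ B then g j else h j, ?_, ?_, ?_⟩
  · intro j hj
    by_cases hjB : j ∈ B
    · simp only [if_pos hjB]; exact (Finset.mem_filter.1 hjB).2.1
    · simp only [if_neg hjB]
      have hmem := hhmem j (Finset.mem_sdiff.2 ⟨hj, hjB⟩)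
      rw [hAdef] at hmem
      exact (Finset.mem_sdiff.1 hmem).1
  · intro j hj o ho hne
    by_cases hjB : j ∈ B
    · simp only [if_pos hjB]
      intro hgo
      have hj2 := (Finset.mem_filter.1 hjB).2.2
      have : o ∈ J.filter (fun o' => g o' = g j) := Finset.mem_filter.2 ⟨ho, hgo⟩
      rw [hj2] at this
      exact hne (Finset.mem_singleton.1 this)
    · simp only [if_neg hjB]
      intro hgo
      have hhj : h j ∈ A := hhmem j (Finset.mem_sdiff.2 ⟨hj, hjB⟩)
      rw [hAdef] at hhj
      exact (Finset.mem_sdiff.1 hhj).2 (hgo ▸ Finset.mem_image_of_mem g ho)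
  · intro i
    by_cases hiA : i ∈ A
    · have hsub : J.filter (fun j => (if j ∈ B then g j else h j) = i) ⊆
          (J \ B).filter (fun j => h j = i) := by
        intro j hj
        obtain ⟨hjJ, hji⟩ := Finset.mem_filter.1 hj
        by_cases hjB : j ∈ B
        · rw [if_pos hjB] at hji
          exact absurd (hji ▸ Finset.mem_image_of_mem g (hBJ hjB))
            ((Finset.mem_sdiff.1 (hAdef ▸ hiA)).2)
        · rw [if_neg hjB] at hji
          exact Finset.mem_filter.2 ⟨Finset.mem_sdiff.2 ⟨hjJ, hjB⟩, hji⟩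
      calc (J.filter (fun j => (if j ∈ B then g j else h j) = i)).card
          ≤ ((J \ B).filter (fun j => h j = i)).card := Finset.card_le_card hsub
        _ ≤ 2 := hhfib i
    · have hsub : J.filter (fun j => (if j ∈ B then g j else h j) = i) ⊆
          B.filter (fun j => g j = i) := by
        intro j hj
        obtain ⟨hjJ, hji⟩ := Finset.mem_filter.1 hj
        by_cases hjB : j ∈ B
        · rw [if_pos hjB] at hji
          exact Finset.mem_filter.2 ⟨hjB, hji⟩
        · rw [if_neg hjB] at hji
          exact absurd (hji ▸ hhmem j (Finset.mem_sdiff.2 ⟨hjJ, hjB⟩)) hiA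
      have hone : (B.filter (fun j => g j = i)).card ≤ 1 := by
        apply Finset.card_le_one.2
        intro a ha b hb
        exact hginj a (Finset.mem_filter.1 ha).1 b (Finset.mem_filter.1 hb).1
          ((Finset.mem_filter.1 ha).2.trans (Finset.mem_filter.1 hb).2.symm)
      calc (J.filter (fun j => (if j ∈ B then g j else h j) = i)).card
          ≤ (B.filter (fun j => g j = i)).card := Finset.card_le_card hsub
        _ ≤ 2 := hone.trans one_le_two

/-- Given a cost-minimizing center set `O` and an arbitrary center set `S`
(both of size `k`, with unique nearest assignments recorded by `nnO`, `nnS`), there is a set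
`𝒮 ⊆ S × O` of `k` candidate 1-swaps, using every center of `O` exactly once and every
center of `S` at most twice, such that:
(a) for `p` with `nn(p) ∈ S ∩ O` (i.e. `p ∈ X10 ∪ X11`),
    `Σ_{(i,j)∈𝒮} (δ(p) − δ′_{(i,j)}(p)) ≥ δ(p) − δ*(p)`;
(b) for `p ∈ X01` and every `(i,j) ∈ 𝒮`, `δ′_{(i,j)}(p) ≤ δ*(p)`;
(c) for `p ∈ X00`, `Σ_{(i,j)∈𝒮} (δ(p) − δ′_{(i,j)}(p)) ≥ δ(p) − 5·δ*(p)`. -/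
theorem candidate_swaps_exist {X : Type*} [Fintype X] [DecidableEq X]
    (δ : X → X → ℝ) (hmetric : IsMetric δ) (k : ℕ)
    (S O : Finset X) (hScard : S.card = k) (hOcard : O.card = k)
    (hUS : UniqueNearest δ S) (hUO : UniqueNearest δ O)
    (hOopt : ∀ T : Finset X, T.card = k → kmedCost δ O ≤ kmedCost δ T)
    (nnS nnO : X → X)
    (hnnS : ∀ p, nnS p ∈ S ∧ ∀ c ∈ S, δ p (nnS p) ≤ δ p c)
    (hnnO : ∀ p, nnO p ∈ O ∧ ∀ c ∈ O, δ p (nnO p) ≤ δ p c) :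
    ∃ 𝒮 : Finset (X × X), 𝒮 ⊆ S ×ˢ O ∧ 𝒮.card = k ∧
      (∀ j ∈ O, (𝒮.filter (fun e => e.2 = j)).card = 1) ∧
      (∀ i ∈ S, (𝒮.filter (fun e => e.1 = i)).card ≤ 2) ∧
      (∀ p : X, nnS p ∈ S ∩ O →
        δ p (nnS p) - δ p (nnO p) ≤
          ∑ e ∈ 𝒮, (δ p (nnS p) - swapDist δ S e.1 e.2 p)) ∧
      (∀ p : X, nnS p ∈ S \ O → nnO p ∈ S ∩ O →
        ∀ e ∈ 𝒮, swapDist δ S e.1 e.2 p ≤ δ p (nnO p)) ∧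
      (∀ p : X, nnS p ∈ S \ O → nnO p ∈ O \ S →
        δ p (nnS p) - 5 * δ p (nnO p) ≤
          ∑ e ∈ 𝒮, (δ p (nnS p) - swapDist δ S e.1 e.2 p)) := by
  classical
  obtain ⟨hnonneg, hzero, hsep, hsymm, htri⟩ := hmetric
  -- the assignment for centers of O \ S
  have hIJ : (O \ S).card ≤ (S \ O).card := by
    have h1 := Finset.card_sdiff_add_card_inter S O
    have h2 := Finset.card_sdiff_add_card_inter O S
    rw [Finset.inter_comm O S] at h2
    omega
  obtain ⟨f, hfI, hfcap, hffib⟩ := exists_assignment' (S \ O) (O \ S) hIJ nnS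
  set F : X → X := fun j => if j ∈ S then j else f j with hFdef
  set 𝒮 : Finset (X × X) := O.image (fun j => (F j, j)) with h𝒮def
  have hinj : Function.Injective (fun j : X => (F j, j)) := fun a b h => congrArg Prod.snd h
  have hmem𝒮 : ∀ e ∈ 𝒮, ∃ j ∈ O, (F j, j) = e := fun e he => Finset.mem_image.1 he
  have hFS : ∀ j ∈ O, F j ∈ S := by
    intro j hj
    by_cases hjS : j ∈ S
    · simpa [hFdef, hjS] using hjS
    · have : f j ∈ S \ O := hfI j (Finset.mem_sdiff.2 ⟨hj, hjS⟩)
      simpa [hFdef, hjS] using (Finset.mem_sdiff.1 this).1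
  -- key upper bound for swapDist
  have key : ∀ i j (p c : X), c ∈ insert j (S.erase i) → swapDist δ S i j p ≤ δ p c := by
    intro i j p c hc
    exact sInf_image_le' δ p hc
  -- if F j equals a point of S ∩ O or of O then j ∈ S and F j = j
  have hFcases : ∀ j ∈ O, ∀ c : X, c ∈ O → F j = c → j = c ∧ j ∈ S ∨ (j ∉ S ∧ f j = c) := by
    intro j hj c hc hFc
    by_cases hjS : j ∈ S
    · left
      constructor
      · simp only [hFdef, hjS, if_pos] at hFc; exact hFc
      · exact hjS
    · right
      refine ⟨hjS, ?_⟩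
      simpa [hFdef, hjS] using hFc
  have hfirst : ∀ i ∈ S, (𝒮.filter (fun e => e.1 = i)).card ≤ 2 := by
    intro i hi
    have hcard : (𝒮.filter (fun e => e.1 = i)).card = (O.filter (fun j => F j = i)).card := by
      rw [h𝒮def, Finset.filter_image, Finset.card_image_of_injective _ hinj]
    rw [hcard]
    by_cases hiO : i ∈ O
    · have hsub : O.filter (fun j => F j = i) ⊆ {i} := by
        intro j hj
        obtain ⟨hjO, hji⟩ := Finset.mem_filter.1 hj
        rcases hFcases j hjO i hiO hji with ⟨h1, _⟩ | ⟨hjS, hfj⟩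
        · exact Finset.mem_singleton.2 h1
        · exfalso
          have : f j ∈ S \ O := hfI j (Finset.mem_sdiff.2 ⟨hjO, hjS⟩)
          exact (Finset.mem_sdiff.1 this).2 (hfj ▸ hiO)
      exact le_trans (Finset.card_le_card hsub) (by simp)
    · have hsub : O.filter (fun j => F j = i) ⊆ (O \ S).filter (fun j => f j = i) := by
        intro j hj
        obtain ⟨hjO, hji⟩ := Finset.mem_filter.1 hj
        by_cases hjS : j ∈ S
        · exfalso
          simp only [hFdef, hjS, if_pos] at hji
          exact hiO (hji ▸ hjO)
        · simp only [hFdef, hjS, if_neg, ite_false] at hji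
          exact Finset.mem_filter.2 ⟨Finset.mem_sdiff.2 ⟨hjO, hjS⟩, hji⟩
      exact le_trans (Finset.card_le_card hsub) (hffib i)
  refine ⟨𝒮, ?_, ?_, ?_, hfirst, ?_, ?_, ?_⟩
  · -- 𝒮 ⊆ S ×ˢ O
    intro e he
    obtain ⟨j, hj, rfl⟩ := hmem𝒮 e he
    exact Finset.mem_product.2 ⟨hFS j hj, hj⟩
  · -- card
    rw [h𝒮def, Finset.card_image_of_injective _ hinj, hOcard]
  · -- every j ∈ O used exactly once as second coordinate
    intro j hj
    have : 𝒮.filter (fun e => e.2 = j) = {(F j, j)} := by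
      ext e
      simp only [Finset.mem_filter, h𝒮def, Finset.mem_image, Finset.mem_singleton]
      constructor
      · rintro ⟨⟨j', hj', rfl⟩, h2⟩
        simp only at h2
        subst h2; rfl
      · rintro rfl
        exact ⟨⟨j, hj, rfl⟩, rfl⟩
    rw [this, Finset.card_singleton]
  · -- (a)
    intro p hp
    obtain ⟨hpS, hpO⟩ := Finset.mem_inter.1 hp
    have he₀ : (F (nnO p), nnO p) ∈ 𝒮 := Finset.mem_image_of_mem _ (hnnO p).1
    have hterms : ∀ e ∈ 𝒮, 0 ≤ δ p (nnS p) - swapDist δ S e.1 e.2 p := by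
      rintro e he
      obtain ⟨j, hj, rfl⟩ := hmem𝒮 e he
      have hmem : nnS p ∈ insert j (S.erase (F j)) := by
        by_cases hne : F j = nnS p
        · rcases hFcases j hj (nnS p) hpO hne with ⟨h1, _⟩ | ⟨hjS, hfj⟩
          · rw [← h1]; exact Finset.mem_insert_self _ _
          · exfalso
            have : f j ∈ S \ O := hfI j (Finset.mem_sdiff.2 ⟨hj, hjS⟩)
            exact (Finset.mem_sdiff.1 this).2 (hfj ▸ hpO)
        · exact Finset.mem_insert_of_mem (Finset.mem_erase.2 ⟨fun h => hne h.symm, hpS⟩)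
      have := key (F j) j p (nnS p) hmem
      simpa using this
    have hspecial : swapDist δ S (F (nnO p)) (nnO p) p ≤ δ p (nnO p) :=
      key _ _ p (nnO p) (Finset.mem_insert_self _ _)
    have hsingle := Finset.single_le_sum hterms he₀
    simp only at hsingle
    linarith
  · -- (b)
    intro p hp1 hp2 e he
    obtain ⟨j, hj, rfl⟩ := hmem𝒮 e he
    obtain ⟨hoS, hoO⟩ := Finset.mem_inter.1 hp2
    have hmem : nnO p ∈ insert j (S.erase (F j)) := by
      by_cases hne : F j = nnO p
      · rcases hFcases j hj (nnO p) hoO hne with ⟨h1, _⟩ | ⟨hjS, hfj⟩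
        · rw [← h1]; exact Finset.mem_insert_self _ _
        · exfalso
          have : f j ∈ S \ O := hfI j (Finset.mem_sdiff.2 ⟨hj, hjS⟩)
          exact (Finset.mem_sdiff.1 this).2 (hfj ▸ hoO)
      · exact Finset.mem_insert_of_mem (Finset.mem_erase.2 ⟨fun h => hne h.symm, hoS⟩)
    exact key (F j) j p (nnO p) hmem
  · -- (c)
    intro p hp1 hp2
    obtain ⟨hsS, hsO⟩ := Finset.mem_sdiff.1 hp1
    obtain ⟨hoO, hoS⟩ := Finset.mem_sdiff.1 hp2
    set j₀ := nnO p with hj₀def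
    set e₀ : X × X := (F j₀, j₀) with he₀def
    have he₀ : e₀ ∈ 𝒮 := Finset.mem_image_of_mem _ hoO
    set T : X × X → ℝ := fun e => δ p (nnS p) - swapDist δ S e.1 e.2 p with hTdef
    have hd0 : 0 ≤ δ p (nnO p) := hnonneg p (nnO p)
    -- bound for the special pair
    have hspec : δ p (nnS p) - δ p (nnO p) ≤ T e₀ := by
      have : swapDist δ S (F j₀) j₀ p ≤ δ p j₀ := key _ _ p j₀ (Finset.mem_insert_self _ _)
      simp only [hTdef, he₀def]
      linarith
    -- bound for bad pairs (first coordinate = nnS p, not the special pair)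
    have hbad : ∀ e ∈ (𝒮.erase e₀).filter (fun e => e.1 = nnS p),
        -2 * δ p (nnO p) ≤ T e := by
      intro e he
      obtain ⟨hee, he1⟩ := Finset.mem_filter.1 he
      have heS : e ∈ 𝒮 := Finset.mem_of_mem_erase hee
      have hene : e ≠ e₀ := Finset.ne_of_mem_erase hee
      obtain ⟨j, hj, rfl⟩ := hmem𝒮 e heS
      simp only at he1
      have hjne : j ≠ j₀ := by
        intro h; exact hene (by rw [he₀def, h])
      -- j ∉ S : otherwise F j = j ∈ O ∩ S contradiction with nnS p ∉ O... F j = nnS p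
      have hjS : j ∉ S := by
        intro hjS
        simp only [hFdef, hjS, if_pos] at he1
        exact hsO (he1 ▸ hj)
      have hfj : f j = nnS p := by
        simpa [hFdef, hjS] using he1
      -- rerouting center s = nnS j₀
      have hcap2 : nnS j₀ ≠ f j := hfcap j (Finset.mem_sdiff.2 ⟨hj, hjS⟩) j₀
        (Finset.mem_sdiff.2 ⟨hoO, hoS⟩) (Ne.symm hjne)
      have hsmem : nnS j₀ ∈ insert j (S.erase (F j)) := by
        apply Finset.mem_insert_of_mem
        apply Finset.mem_erase.2
        constructor
        · simp only [hFdef, hjS, ite_false]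
          exact hcap2
        · exact (hnnS j₀).1
      have h1 : swapDist δ S (F j) j p ≤ δ p (nnS j₀) := key _ _ p _ hsmem
      have h2 : δ p (nnS j₀) ≤ δ p j₀ + δ j₀ (nnS j₀) := htri p j₀ (nnS j₀)
      have h3 : δ j₀ (nnS j₀) ≤ δ j₀ (nnS p) := (hnnS j₀).2 (nnS p) (hnnS p).1
      have h4 : δ j₀ (nnS p) ≤ δ j₀ p + δ p (nnS p) := htri j₀ p (nnS p)
      have h5 : δ j₀ p = δ p j₀ := hsymm j₀ p
      simp only [hTdef]
      have : δ p j₀ = δ p (nnO p) := rfl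
      linarith
    -- good pairs have nonnegative contribution
    have hgood : ∀ e ∈ (𝒮.erase e₀).filter (fun e => ¬ e.1 = nnS p), 0 ≤ T e := by
      intro e he
      obtain ⟨hee, he1⟩ := Finset.mem_filter.1 he
      obtain ⟨j, hj, rfl⟩ := hmem𝒮 e (Finset.mem_of_mem_erase hee)
      simp only at he1
      have hmem : nnS p ∈ insert j (S.erase (F j)) :=
        Finset.mem_insert_of_mem (Finset.mem_erase.2 ⟨fun h => he1 h.symm, hsS⟩)
      have := key (F j) j p (nnS p) hmem
      simp only [hTdef]
      linarith
    -- count of bad pairs is at most 2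
    have hbadcard : ((𝒮.erase e₀).filter (fun e => e.1 = nnS p)).card ≤ 2 := by
      refine le_trans (Finset.card_le_card ?_) (hfirst (nnS p) hsS)
      exact Finset.filter_subset_filter _ (Finset.erase_subset _ _)
    have hsum1 : -4 * δ p (nnO p) ≤
        ∑ e ∈ (𝒮.erase e₀).filter (fun e => e.1 = nnS p), T e := by
      have h1 : ∑ _e ∈ (𝒮.erase e₀).filter (fun e => e.1 = nnS p), (-2 * δ p (nnO p)) ≤
          ∑ e ∈ (𝒮.erase e₀).filter (fun e => e.1 = nnS p), T e := Finset.sum_le_sum hbad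
      rw [Finset.sum_const, nsmul_eq_mul] at h1
      have h2 : ((((𝒮.erase e₀).filter (fun e => e.1 = nnS p)).card : ℕ) : ℝ) ≤ 2 := by
        exact_mod_cast hbadcard
      nlinarith
    have hsum2 : 0 ≤ ∑ e ∈ (𝒮.erase e₀).filter (fun e => ¬ e.1 = nnS p), T e :=
      Finset.sum_nonneg hgood
    have hsplit : ∑ e ∈ (𝒮.erase e₀).filter (fun e => e.1 = nnS p), T e +
        ∑ e ∈ (𝒮.erase e₀).filter (fun e => ¬ e.1 = nnS p), T e =
        ∑ e ∈ 𝒮.erase e₀, T e :=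
      Finset.sum_filter_add_sum_filter_not _ _ _
    have htotal : T e₀ + ∑ e ∈ 𝒮.erase e₀, T e = ∑ e ∈ 𝒮, T e :=
      Finset.add_sum_erase 𝒮 T he₀
    have hgoal : δ p (nnS p) - 5 * δ p (nnO p) ≤ ∑ e ∈ 𝒮, T e := by linarith
    simpa [hTdef] using hgoal
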